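/- Let β ≠ 0 and ε ≠ 0 be real numbers, let V ∈ ℝ, and let ψ₀ ∈ ℂ. Define ψ : ℝ → ℂ by ψ(t) = exp(i·(V − |ψ₀|²)·t/(β·ε²)) · ψ₀. Then ψ(0) = ψ₀, |ψ(t)| = |ψ₀| for all t ∈ ℝ, and ψ is differentiable with −i·β·ψ′(t) = (1/ε²)·(V − |ψ(t)|²)·ψ(t) for all t ∈ ℝ. -/

import Mathlib

/-- **Exact solution of the nonlinear substep (case η = 0, β ≠ 0).**
For `β ≠ 0`, `ε ≠ 0`, `V ∈ ℝ`, `ψ₀ ∈ ℂ` and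
`ψ(t) = exp(i (V − |ψ₀|²) t / (β ε²)) ψ₀`, one has `ψ(0) = ψ₀`, `|ψ(t)| = |ψ₀|`
for all `t`, and `ψ` is differentiable with
`−iβ ψ′(t) = (1/ε²)(V − |ψ(t)|²) ψ(t)` for all `t`. -/
theorem nonlinear_substep_exact_solution
    (β ε V : ℝ) (hβ : β ≠ 0) (hε : ε ≠ 0) (ψ₀ : ℂ) (ψ : ℝ → ℂ)
    (hψ : ∀ t : ℝ, ψ t =
      Complex.exp (Complex.I * ((V : ℂ) - (‖ψ₀‖ : ℂ) ^ 2) * (t : ℂ) /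
        ((β : ℂ) * (ε : ℂ) ^ 2)) * ψ₀) :
    ψ 0 = ψ₀ ∧
    (∀ t : ℝ, ‖ψ t‖ = ‖ψ₀‖) ∧
    (∀ t : ℝ, DifferentiableAt ℝ ψ t) ∧
    (∀ t : ℝ, -(Complex.I * (β : ℂ)) * deriv ψ t
      = (1 / (ε : ℂ) ^ 2) * ((V : ℂ) - (‖ψ t‖ : ℂ) ^ 2) * ψ t) := by
  set a : ℝ := ‖ψ₀‖ with ha
  set c : ℂ := Complex.I * ((V : ℂ) - (a : ℂ) ^ 2) / ((β : ℂ) * (ε : ℂ) ^ 2) with hc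
  have hψ' : ψ = fun t : ℝ => Complex.exp (c * t) * ψ₀ := by
    funext t
    rw [hψ t, hc]
    ring_nf
  have habs : ∀ t : ℝ, ‖ψ t‖ = a := by
    intro t
    have harg : c * (t : ℂ) = (((V - a ^ 2) * t / (β * ε ^ 2) : ℝ) : ℂ) * Complex.I := by
      rw [hc]; push_cast; ring
    rw [hψ', norm_mul]
    rw [harg, Complex.norm_exp_ofReal_mul_I, one_mul, ha]
  have hderiv : ∀ t : ℝ, HasDerivAt ψ (c * Complex.exp (c * t) * ψ₀) t := by
    intro t
    rw [hψ']
    have h1 : HasDerivAt (fun t : ℝ => (c * t : ℂ)) c t := by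
      simpa using (Complex.ofRealCLM.hasDerivAt (x := t)).const_mul c
    simpa [mul_comm] using (h1.cexp.mul_const ψ₀)
    -- derivative: exp(c t) * c * ψ₀
  refine ⟨by simp [hψ'], habs, fun t => (hderiv t).differentiableAt, fun t => ?_⟩
  rw [(hderiv t).deriv, habs t, hψ', hc]
  have hβ' : (β : ℂ) ≠ 0 := by exact_mod_cast hβ
  have hε' : (ε : ℂ) ≠ 0 := by exact_mod_cast hε
  field_simp
  ring_nf
  simp [Complex.I_sq]
  ring
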